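/- Let Φ = (G, φ) be a T-gain graph on a connected graph with the standard vertex order <. Then D^max_<(Φ) = D^min_<(Φ) if and only if for every pair of vertices s, t, all shortest paths from s to t have the same gain; and in that case D^max_{<_a}(Φ) = D^min_{<_a}(Φ) for every vertex ordering <_a. -/

import Mathlib

open Matrix
open scoped Classical

noncomputable section

namespace GG

variable {V : Type*}

/-- The gain of a walk: product of the gains of its oriented edges. -/
def walkGain {G : SimpleGraph V} (φ : V → V → ℂ) {u v : V} (p : G.Walk u v) : ℂ :=
  (p.darts.map (fun d => φ d.toProd.1 d.toProd.2)).prod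

/-- `φ` is a `𝕋`-gain function on `G`: unit modulus on edges, inverse under reversal. -/
def IsGain (G : SimpleGraph V) (φ : V → V → ℂ) : Prop :=
  (∀ i j, G.Adj i j → ‖φ i j‖ = 1) ∧ (∀ i j, G.Adj i j → φ j i = (φ i j)⁻¹)

/-- Adjacency matrix of a gain graph. -/
def gainAdj [Fintype V] [DecidableEq V] (G : SimpleGraph V) (φ : V → V → ℂ) :
    Matrix V V ℂ := fun i j => if G.Adj i j then φ i j else 0

/-- A gain graph is balanced if every cycle has gain 1. -/
def GBalanced (G : SimpleGraph V) (φ : V → V → ℂ) : Prop :=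
  ∀ (u : V) (c : G.Walk u u), c.IsCycle → walkGain φ c = 1

/-- All shortest paths between any pair of vertices have the same gain. -/
def DistCompatible (G : SimpleGraph V) (φ : V → V → ℂ) : Prop :=
  ∀ (s t : V) (p q : G.Walk s t), p.length = G.dist s t → q.length = G.dist s t →
    walkGain φ p = walkGain φ q

/-- The set of gains of shortest `s`-`t` paths. -/
def shortestGains (G : SimpleGraph V) (φ : V → V → ℂ) (s t : V) : Set ℂ :=
  {z | ∃ p : G.Walk s t, p.length = G.dist s t ∧ walkGain φ p = z}

/-- The element of `S` maximizing the real part, ties broken by maximal imaginary part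
(correct for finite nonempty sets of gains). -/
def lexMaxGain (S : Set ℂ) : ℂ :=
  ⟨sSup (Complex.re '' S), sSup (Complex.im '' {z ∈ S | z.re = sSup (Complex.re '' S)})⟩

/-- The element of `S` minimizing the real part, ties broken by minimal imaginary part. -/
def lexMinGain (S : Set ℂ) : ℂ :=
  ⟨sInf (Complex.re '' S), sInf (Complex.im '' {z ∈ S | z.re = sInf (Complex.re '' S)})⟩

/-- The maximum gain distance matrix `D^max_<(Φ)` with respect to a strict order `lt`. -/
def Dmax [Fintype V] [DecidableEq V] (G : SimpleGraph V) (φ : V → V → ℂ)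
    (lt : V → V → Prop) : Matrix V V ℂ := fun s t =>
  if lt s t then lexMaxGain (shortestGains G φ s t) * (G.dist s t : ℂ)
  else if lt t s then (starRingEnd ℂ) (lexMaxGain (shortestGains G φ t s)) * (G.dist s t : ℂ)
  else 0

/-- The minimum gain distance matrix `D^min_<(Φ)` with respect to a strict order `lt`. -/
def Dmin [Fintype V] [DecidableEq V] (G : SimpleGraph V) (φ : V → V → ℂ)
    (lt : V → V → Prop) : Matrix V V ℂ := fun s t =>
  if lt s t then lexMinGain (shortestGains G φ s t) * (G.dist s t : ℂ)
  else if lt t s then (starRingEnd ℂ) (lexMinGain (shortestGains G φ t s)) * (G.dist s t : ℂ)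
  else 0

/-- Vertex order independence: the gain distance matrices agree for the standard order
and its reverse. -/
def OrderIndependent [Fintype V] [DecidableEq V] [LinearOrder V] (G : SimpleGraph V)
    (φ : V → V → ℂ) : Prop :=
  Dmax G φ (· < ·) = Dmax G φ (fun a b => b < a) ∧
  Dmin G φ (· < ·) = Dmin G φ (fun a b => b < a)

/-- The largest (real) eigenvalue of a matrix. -/
def maxEig [Fintype V] [DecidableEq V] (A : Matrix V V ℂ) : ℝ :=
  sSup {r : ℝ | (r : ℂ) ∈ spectrum ℂ A}

/-- The spectral radius of a matrix. -/
def specRad [Fintype V] [DecidableEq V] (A : Matrix V V ℂ) : ℝ :=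
  sSup {r : ℝ | ∃ z ∈ spectrum ℂ A, ‖z‖ = r}

/-- The distance matrix of the underlying graph, as a complex matrix. -/
def distMatrix [Fintype V] [DecidableEq V] (G : SimpleGraph V) : Matrix V V ℂ :=
  fun i j => (G.dist i j : ℂ)

/-- Weighted gain adjacency matrix `A(Φ_w)`. -/
def wGainAdj [Fintype V] [DecidableEq V] (G : SimpleGraph V) (φ : V → V → ℂ)
    (w : V → V → ℝ) : Matrix V V ℂ := fun i j => if G.Adj i j then φ i j * (w i j : ℂ) else 0

/-- Weighted adjacency matrix `A(G_w)` of the underlying weighted graph. -/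
def wAdj [Fintype V] [DecidableEq V] (G : SimpleGraph V) (w : V → V → ℝ) :
    Matrix V V ℂ := fun i j => if G.Adj i j then (w i j : ℂ) else 0


lemma walkGain_cons {G : SimpleGraph V} (φ : V → V → ℂ) {u v w : V} (h : G.Adj u v)
    (p : G.Walk v w) : walkGain φ (SimpleGraph.Walk.cons h p) = φ u v * walkGain φ p := by
  simp [walkGain]

lemma walkGain_append {G : SimpleGraph V} (φ : V → V → ℂ) {u v w : V} (p : G.Walk u v)
    (q : G.Walk v w) : walkGain φ (p.append q) = walkGain φ p * walkGain φ q := by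
  simp [walkGain, SimpleGraph.Walk.darts_append]

lemma abs_walkGain {G : SimpleGraph V} {φ : V → V → ℂ} (hφ : IsGain G φ) {u v : V}
    (p : G.Walk u v) : ‖walkGain φ p‖ = 1 := by
  induction p with
  | nil => simp [walkGain]
  | cons h p ih => rw [walkGain_cons, norm_mul, ih, hφ.1 _ _ h, one_mul]

lemma walkGain_reverse {G : SimpleGraph V} {φ : V → V → ℂ} (hφ : IsGain G φ) {u v : V}
    (p : G.Walk u v) : walkGain φ p.reverse = (starRingEnd ℂ) (walkGain φ p) := by
  rw [← Complex.inv_eq_conj (abs_walkGain hφ p)]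
  induction p with
  | nil => simp [walkGain]
  | cons h p ih =>
    rw [SimpleGraph.Walk.reverse_cons, walkGain_append, ih, walkGain_cons, walkGain_cons,
      hφ.2 _ _ h, mul_inv]
    simp [walkGain, mul_comm]

lemma lexMaxGain_singleton (g : ℂ) : lexMaxGain {g} = g := by
  have h1 : Complex.re '' {g} = {g.re} := Set.image_singleton
  have h2 : {z ∈ ({g} : Set ℂ) | z.re = sSup (Complex.re '' {g})} = {g} := by
    ext z; simp [h1, csSup_singleton]; rintro rfl; rfl
  unfold lexMaxGain
  rw [h2, h1, Set.image_singleton, csSup_singleton, csSup_singleton]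

lemma lexMinGain_singleton (g : ℂ) : lexMinGain {g} = g := by
  have h1 : Complex.re '' {g} = {g.re} := Set.image_singleton
  have h2 : {z ∈ ({g} : Set ℂ) | z.re = sInf (Complex.re '' {g})} = {g} := by
    ext z; simp [h1, csInf_singleton]; rintro rfl; rfl
  unfold lexMinGain
  rw [h2, h1, Set.image_singleton, csInf_singleton, csInf_singleton]

lemma eq_of_lexEq {S : Set ℂ} (hb : ∀ z ∈ S, ‖z‖ = 1)
    (h : lexMaxGain S = lexMinGain S) : ∀ z ∈ S, ∀ w ∈ S, z = w := by
  have hre_ub : BddAbove (Complex.re '' S) := by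
    refine ⟨1, ?_⟩; rintro x ⟨z, hz, rfl⟩
    calc z.re ≤ |z.re| := le_abs_self _
    _ ≤ ‖z‖ := Complex.abs_re_le_norm z
    _ = 1 := hb z hz
  have hre_lb : BddBelow (Complex.re '' S) := by
    refine ⟨-1, ?_⟩; rintro x ⟨z, hz, rfl⟩
    have := Complex.abs_re_le_norm z
    rw [hb z hz] at this
    linarith [neg_abs_le z.re]
  have hre : sSup (Complex.re '' S) = sInf (Complex.re '' S) :=
    congrArg Complex.re h
  have him : sSup (Complex.im '' {z ∈ S | z.re = sSup (Complex.re '' S)}) =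
      sInf (Complex.im '' {z ∈ S | z.re = sInf (Complex.re '' S)}) :=
    congrArg Complex.im h
  intro z hz w hw
  have hzre : ∀ x ∈ S, x.re = sSup (Complex.re '' S) := by
    intro x hx
    have h1 : x.re ≤ sSup (Complex.re '' S) := le_csSup hre_ub ⟨x, hx, rfl⟩
    have h2 : sInf (Complex.re '' S) ≤ x.re := csInf_le hre_lb ⟨x, hx, rfl⟩
    rw [← hre] at h2; linarith
  have hT : {x ∈ S | x.re = sSup (Complex.re '' S)} = S := by
    ext x; simp only [Set.mem_setOf_eq, and_iff_left_iff_imp]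
    exact fun h => hzre x h
  have hT' : {x ∈ S | x.re = sInf (Complex.re '' S)} = S := by rw [← hre]; exact hT
  rw [hT] at him; rw [hT'] at him
  have him_ub : BddAbove (Complex.im '' S) := by
    refine ⟨1, ?_⟩; rintro x ⟨y, hy, rfl⟩
    calc y.im ≤ |y.im| := le_abs_self _
    _ ≤ ‖y‖ := Complex.abs_im_le_norm y
    _ = 1 := hb y hy
  have him_lb : BddBelow (Complex.im '' S) := by
    refine ⟨-1, ?_⟩; rintro x ⟨y, hy, rfl⟩
    have := Complex.abs_im_le_norm y
    rw [hb y hy] at this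
    linarith [neg_abs_le y.im]
  have hzim : ∀ x ∈ S, x.im = sSup (Complex.im '' S) := by
    intro x hx
    have h1 : x.im ≤ sSup (Complex.im '' S) := le_csSup him_ub ⟨x, hx, rfl⟩
    have h2 : sInf (Complex.im '' S) ≤ x.im := csInf_le him_lb ⟨x, hx, rfl⟩
    rw [← him] at h2; linarith
  apply Complex.ext
  · rw [hzre z hz, hzre w hw]
  · rw [hzim z hz, hzim w hw]

/-- `D^max_< = D^min_<` for the standard order iff all shortest paths between
any pair of vertices have the same gain; in that case the equality holds for every order. -/
theorem Dmax_eq_Dmin_iff {V : Type*} [Fintype V] [DecidableEq V] [LinearOrder V]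
    (G : SimpleGraph V) (hconn : G.Connected) (φ : V → V → ℂ) (hφ : IsGain G φ) :
    (Dmax G φ (· < ·) = Dmin G φ (· < ·) ↔
      ∀ (s t : V) (p q : G.Walk s t), p.length = G.dist s t → q.length = G.dist s t →
        walkGain φ p = walkGain φ q) ∧
    (Dmax G φ (· < ·) = Dmin G φ (· < ·) →
      ∀ r : V → V → Prop, IsStrictTotalOrder V r → Dmax G φ r = Dmin G φ r)  := by
  have habs : ∀ s t : V, ∀ z ∈ shortestGains G φ s t, ‖z‖ = 1 := by
    rintro s t z ⟨p, _, rfl⟩; exact abs_walkGain hφ p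
  have keyA : (∀ (s t : V) (p q : G.Walk s t), p.length = G.dist s t → q.length = G.dist s t →
      walkGain φ p = walkGain φ q) →
      ∀ s t : V, lexMaxGain (shortestGains G φ s t) = lexMinGain (shortestGains G φ s t) := by
    intro hc s t
    obtain ⟨p, hp⟩ := hconn.exists_walk_length_eq_dist s t
    have hS : shortestGains G φ s t = {walkGain φ p} := by
      ext z; constructor
      · rintro ⟨q, hq, rfl⟩
        simp only [Set.mem_singleton_iff]
        exact hc s t q p hq hp
      · rintro rfl; exact ⟨p, hp, rfl⟩
    rw [hS, lexMaxGain_singleton, lexMinGain_singleton]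
  have keyB : (∀ s t : V,
      lexMaxGain (shortestGains G φ s t) = lexMinGain (shortestGains G φ s t)) →
      ∀ r : V → V → Prop, Dmax G φ r = Dmin G φ r := by
    intro hl r
    funext s t
    unfold Dmax Dmin
    split_ifs with h1 h2
    · rw [hl s t]
    · rw [hl t s]
    · rfl
  have keyC : Dmax G φ (· < ·) = Dmin G φ (· < ·) →
      ∀ (s t : V) (p q : G.Walk s t), p.length = G.dist s t → q.length = G.dist s t →
      walkGain φ p = walkGain φ q := by
    intro h s t p q hp hq
    rcases lt_trichotomy s t with hst | hst | hst
    · have hd : (G.dist s t : ℂ) ≠ 0 := by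
        exact_mod_cast (hconn.pos_dist_of_ne (ne_of_lt hst)).ne'
      have he := congrFun (congrFun h s) t
      simp only [Dmax, Dmin, if_pos hst] at he
      exact eq_of_lexEq (habs s t) (mul_right_cancel₀ hd he) _ ⟨p, hp, rfl⟩ _ ⟨q, hq, rfl⟩
    · subst hst
      have hds : G.dist s s = 0 := by simp
      rw [hds] at hp hq
      rw [SimpleGraph.Walk.length_eq_zero_iff, SimpleGraph.Walk.nil_iff_eq_nil] at hp hq
      rw [hp, hq]
    · have hd : (G.dist t s : ℂ) ≠ 0 := by
        exact_mod_cast (hconn.pos_dist_of_ne (ne_of_lt hst)).ne'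
      have he := congrFun (congrFun h t) s
      simp only [Dmax, Dmin, if_pos hst] at he
      have hrev := eq_of_lexEq (habs t s) (mul_right_cancel₀ hd he) _
        ⟨p.reverse, by rw [SimpleGraph.Walk.length_reverse, hp, SimpleGraph.dist_comm], rfl⟩ _
        ⟨q.reverse, by rw [SimpleGraph.Walk.length_reverse, hq, SimpleGraph.dist_comm], rfl⟩
      rw [walkGain_reverse hφ, walkGain_reverse hφ] at hrev
      exact (starRingEnd ℂ).injective hrev
  exact ⟨⟨keyC, fun hc => keyB (keyA hc) _⟩, fun h r _ => keyB (keyA (keyC h)) r⟩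


end GG
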